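/- Let C_* be a normed ℝ-chain complex satisfying the uniform boundary condition in degree n−1 with constant K'. Then every cycle c in the ℓ¹-completion C̄_n can be written as an ℓ¹-convergent sum c = Σ_{k=0}^∞ c_k of cycles c_k ∈ C_n with Σ_k |c_k| < ∞. -/

import Mathlib

open UniformSpace

/-- **Decomposition of ℓ¹-cycles into ordinary cycles.**
Let `C_n --d--> C_{n-1}` be (part of) a normed ℝ-chain complex, satisfying the uniform
boundary condition in degree `n−1` with constant `K'` (every null-homologous
`(n−1)`-cycle `z`, i.e. every `z` in the range of `d`, admits `b ∈ C_n` with `d b = z` and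
`‖b‖ ≤ K'·‖z‖`).  Then every cycle `c` in the ℓ¹-completion `C̄_n` (i.e. every `c` killed
by the continuously extended boundary operator) can be written as an ℓ¹-convergent sum
`c = Σ_{k} c_k` of cycles `c_k ∈ C_n` with `Σ_k ‖c_k‖ < ∞`. -/
theorem l1_cycles_decompose_into_cycles
    {Cn Cm : Type*} [NormedAddCommGroup Cn] [NormedSpace ℝ Cn]
    [NormedAddCommGroup Cm] [NormedSpace ℝ Cm]
    (d : Cn →L[ℝ] Cm)
    (K' : ℝ) (hK' : 0 < K')
    (hubc : ∀ z ∈ Set.range d, ∃ b : Cn, d b = z ∧ ‖b‖ ≤ K' * ‖z‖) :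
    ∀ c : Completion Cn, Completion.map d c = 0 →
      ∃ f : ℕ → Cn,
        (∀ k, d (f k) = 0) ∧
        Summable (fun k => ‖f k‖) ∧
        HasSum (fun k => ((f k : Cn) : Completion Cn)) c := by
  intro c hc
  classical
  -- the boundary map as a normed group hom, and its completion
  set D0 : NormedAddGroupHom Cn Cm :=
    d.toLinearMap.toAddMonoidHom.mkNormedAddGroupHom ‖d‖ d.le_opNorm with hD0
  set D : NormedAddGroupHom (Completion Cn) (Completion Cm) := D0.completion with hD
  have hDc : D c = 0 := hc
  set M : ℝ := ‖D‖ with hM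
  have hM0 : 0 ≤ M := norm_nonneg _
  -- the approximating sequence
  set ε : ℕ → ℝ := fun k => (1 / 2 : ℝ) ^ k with hε
  have hεpos : ∀ k, 0 < ε k := fun k => pow_pos (by norm_num) k
  have ha : ∀ k : ℕ, ∃ a : Cn, ‖(a : Completion Cn) - c‖ < ε k := by
    intro k
    obtain ⟨a, hak⟩ := Completion.denseRange_coe.exists_dist_lt c (hεpos k)
    exact ⟨a, by rwa [← dist_eq_norm, dist_comm]⟩
  choose a haa using ha
  -- bound on the boundaries
  have hda : ∀ k, ‖d (a k)‖ ≤ M * ε k := by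
    intro k
    have h1 : ((d (a k) : Cm) : Completion Cm) = D ((a k : Cn) : Completion Cn) :=
      (D0.completion_coe (a k)).symm
    have h2 : ‖d (a k)‖ = ‖D ((a k : Cn) : Completion Cn)‖ := by
      rw [← h1, Completion.norm_coe]
    rw [h2]
    calc ‖D ((a k : Cn) : Completion Cn)‖
        = ‖D (((a k : Cn) : Completion Cn) - c)‖ := by rw [map_sub, hDc, sub_zero]
      _ ≤ M * ‖((a k : Cn) : Completion Cn) - c‖ := D.le_opNorm _
      _ ≤ M * ε k := by
          exact mul_le_mul_of_nonneg_left (le_of_lt (haa k)) hM0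
  -- fillings
  have hb : ∀ k : ℕ, ∃ b : Cn, d b = d (a k) ∧ ‖b‖ ≤ K' * ‖d (a k)‖ :=
    fun k => hubc (d (a k)) ⟨a k, rfl⟩
  choose b hbd hbn using hb
  have hbn' : ∀ k, ‖b k‖ ≤ K' * (M * ε k) := fun k =>
    (hbn k).trans (mul_le_mul_of_nonneg_left (hda k) hK'.le)
  -- the corrected cycles and their differences
  set g : ℕ → Cn := fun k => a k - b k with hg
  have hdg : ∀ k, d (g k) = 0 := by
    intro k; simp [hg, map_sub, hbd k]
  set f : ℕ → Cn := fun k => Nat.casesOn k (g 0) (fun j => g (j + 1) - g j) with hf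
  have hf0 : f 0 = g 0 := rfl
  have hfs : ∀ j, f (j + 1) = g (j + 1) - g j := fun j => rfl
  have hdf : ∀ k, d (f k) = 0 := by
    intro k
    cases k with
    | zero => rw [hf0]; exact hdg 0
    | succ j => simp [hfs, map_sub, hdg]
  -- partial sums telescope
  have hsum : ∀ n : ℕ, ∑ i ∈ Finset.range (n + 1), f i = g n := by
    intro n
    rw [Finset.sum_range_succ']
    have : ∑ i ∈ Finset.range n, f (i + 1) = g n - g 0 := by
      simpa [hfs] using Finset.sum_range_sub g n
    rw [this, hf0, sub_add_cancel]
  -- norm bound on the f's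
  have hgdiff : ∀ j, ‖g (j + 1) - g j‖ ≤ (1 + K' * M) * (ε (j + 1) + ε j) := by
    intro j
    have haj : ∀ i, ‖(a i : Completion Cn) - c‖ ≤ ε i := fun i => (haa i).le
    have h1 : ‖a (j + 1) - a j‖ ≤ ε (j + 1) + ε j := by
      have : ‖a (j + 1) - a j‖ = ‖((a (j+1) : Cn) : Completion Cn) - ((a j : Cn) : Completion Cn)‖ := by
        rw [← Completion.coe_sub, Completion.norm_coe]
      rw [this]
      calc ‖((a (j+1) : Cn) : Completion Cn) - ((a j : Cn) : Completion Cn)‖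
          = ‖(((a (j+1) : Cn) : Completion Cn) - c) - (((a j : Cn) : Completion Cn) - c)‖ := by
            congr 1; abel
        _ ≤ ‖((a (j+1) : Cn) : Completion Cn) - c‖ + ‖((a j : Cn) : Completion Cn) - c‖ :=
            norm_sub_le _ _
        _ ≤ ε (j + 1) + ε j := add_le_add (haj _) (haj _)
    have h2 : ‖g (j + 1) - g j‖ ≤ ‖a (j + 1) - a j‖ + (‖b (j + 1)‖ + ‖b j‖) := by
      have : g (j + 1) - g j = (a (j + 1) - a j) - (b (j + 1) - b j) := by
        simp [hg]; abel
      rw [this]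
      calc ‖(a (j + 1) - a j) - (b (j + 1) - b j)‖
          ≤ ‖a (j + 1) - a j‖ + ‖b (j + 1) - b j‖ := norm_sub_le _ _
        _ ≤ ‖a (j + 1) - a j‖ + (‖b (j + 1)‖ + ‖b j‖) := by
            exact add_le_add le_rfl (norm_sub_le _ _)
    calc ‖g (j + 1) - g j‖ ≤ ‖a (j + 1) - a j‖ + (‖b (j + 1)‖ + ‖b j‖) := h2
      _ ≤ (ε (j + 1) + ε j) + (K' * (M * ε (j + 1)) + K' * (M * ε j)) :=
          add_le_add h1 (add_le_add (hbn' _) (hbn' _))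
      _ = (1 + K' * M) * (ε (j + 1) + ε j) := by ring
  -- summability of the norms
  have hsummable : Summable (fun k => ‖f k‖) := by
    rw [← summable_nat_add_iff 1]
    have hle : ∀ j : ℕ, ‖f (j + 1)‖ ≤ (1 + K' * M) * (ε (j + 1) + ε j) := by
      intro j; rw [hfs]; exact hgdiff j
    have hsum2 : Summable (fun j : ℕ => (1 + K' * M) * (ε (j + 1) + ε j)) := by
      apply Summable.mul_left
      exact Summable.add ((summable_geometric_two).comp_injective (add_left_injective 1))
        summable_geometric_two
    exact Summable.of_nonneg_of_le (fun j => norm_nonneg _) hle hsum2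
  refine ⟨f, hdf, hsummable, ?_⟩
  -- the series converges to c
  set S : ℕ → Completion Cn := fun k => ((f k : Cn) : Completion Cn) with hS
  have hSsummable : Summable S := by
    apply Summable.of_norm
    simpa [hS, Completion.norm_coe] using hsummable
  have htends : Filter.Tendsto (fun n => ∑ i ∈ Finset.range (n + 1), S i)
      Filter.atTop (nhds c) := by
    have heq : ∀ n, ∑ i ∈ Finset.range (n + 1), S i = ((g n : Cn) : Completion Cn) := by
      intro n
      rw [hS]
      rw [show (∑ i ∈ Finset.range (n + 1), ((f i : Cn) : Completion Cn))
          = ((∑ i ∈ Finset.range (n + 1), f i : Cn) : Completion Cn) from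
        (map_sum (NormedAddCommGroup.toCompl (G := Cn)) f (Finset.range (n+1))).symm]
      rw [hsum n]
    rw [show (fun n => ∑ i ∈ Finset.range (n + 1), S i)
        = fun n => ((g n : Cn) : Completion Cn) from funext heq]
    rw [tendsto_iff_norm_sub_tendsto_zero]
    have hbound : ∀ n, ‖((g n : Cn) : Completion Cn) - c‖ ≤ (1 + K' * M) * ε n := by
      intro n
      have : ((g n : Cn) : Completion Cn) - c
          = (((a n : Cn) : Completion Cn) - c) - ((b n : Cn) : Completion Cn) := by
        simp [hg, Completion.coe_sub]; abel
      rw [this]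
      calc ‖(((a n : Cn) : Completion Cn) - c) - ((b n : Cn) : Completion Cn)‖
          ≤ ‖((a n : Cn) : Completion Cn) - c‖ + ‖((b n : Cn) : Completion Cn)‖ :=
            norm_sub_le _ _
        _ ≤ ε n + K' * (M * ε n) := by
            refine add_le_add (haa n).le ?_
            rw [Completion.norm_coe]; exact hbn' n
        _ = (1 + K' * M) * ε n := by ring
    have hεlim : Filter.Tendsto (fun n => (1 + K' * M) * ε n) Filter.atTop (nhds 0) := by
      have := tendsto_pow_atTop_nhds_zero_of_lt_one (by norm_num : (0:ℝ) ≤ 1/2)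
        (by norm_num : (1/2 : ℝ) < 1)
      simpa [hε] using this.const_mul (1 + K' * M)
    exact squeeze_zero (fun n => norm_nonneg _) hbound hεlim
  have hhas : HasSum S (∑' k, S k) := hSsummable.hasSum
  have htends' : Filter.Tendsto (fun n => ∑ i ∈ Finset.range (n + 1), S i)
      Filter.atTop (nhds (∑' k, S k)) :=
    hhas.tendsto_sum_nat.comp (Filter.tendsto_add_atTop_nat 1)
  have : (∑' k, S k) = c := tendsto_nhds_unique htends' htends
  rwa [this] at hhas
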